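/- Let P be a tree, ζ an ordinal, and R a nonempty well-founded subtree of P. Suppose that for each maximal element t of R there is a subtree R_t ⊆ P(t) with rank(R_t) = ζ, and that the sets R_t (for distinct maximal elements t of R) are pairwise totally incomparable (no element of one is comparable to an element of another). Let Q = R ∪ ⋃_{t ∈ Leaves(R)} R_t. Then for every μ ≤ ζ, Q^μ = R ∪ ⋃_{t ∈ Leaves(R)} R_t^μ; for every ordinal η, Q^{ζ+η} = R^η; and in particular rank(Q) = ζ + rank(R). -/

import Mathlib

open Ordinal Set

universe u

/-- The set of maximal elements ("leaves") of `P`. -/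
def treeLeaves {α : Type u} [PartialOrder α] (P : Set α) : Set α :=
  {t ∈ P | ∀ s ∈ P, ¬ t < s}

/-- The derivative `P' = P \ Leaves P`. -/
def treeDeriv {α : Type u} [PartialOrder α] (P : Set α) : Set α :=
  P \ treeLeaves P

/-- The transfinite iterated derivative `P^ξ`. -/
noncomputable def derivIter {α : Type u} [PartialOrder α] (P : Set α) (ξ : Ordinal.{u}) :
    Set α :=
  Ordinal.limitRecOn ξ P (fun _ ih => treeDeriv ih)
    (fun o _ ih => ⋂ (ζ : Set.Iio o), ih ζ.1 ζ.2)

/-- `P` is a tree: every ancestor set is well-ordered (a well-founded chain). -/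
def IsTree {α : Type u} [PartialOrder α] (P : Set α) : Prop :=
  ∀ t ∈ P, IsChain (· ≤ ·) {s ∈ P | s ≤ t} ∧ {s ∈ P | s ≤ t}.WellFoundedOn (· < ·)

/-- `P` is well-founded: some transfinite derivative is empty. -/
def IsWFTree {α : Type u} [PartialOrder α] (P : Set α) : Prop :=
  ∃ ξ : Ordinal.{u}, derivIter P ξ = ∅

/-- The rank of a well-founded tree: the least `ξ` with `P^ξ = ∅`. -/
noncomputable def treeRank {α : Type u} [PartialOrder α] (P : Set α) : Ordinal.{u} :=
  sInf {ξ | derivIter P ξ = ∅}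

/-- `τ_P(t)`: the largest ordinal `ξ` with `t ∈ P^ξ`. -/
noncomputable def treeTau {α : Type u} [PartialOrder α] (P : Set α) (t : α) : Ordinal.{u} :=
  sSup {ξ | t ∈ derivIter P ξ}

/-- `τ_{P,β}(t)`: the largest ordinal `ξ` with `t ∈ P^{β·ξ}`. -/
noncomputable def treeTauMul {α : Type u} [PartialOrder α] (P : Set α) (β : Ordinal.{u})
    (t : α) : Ordinal.{u} :=
  sSup {ξ | t ∈ derivIter P (β * ξ)}

/-- `alpProd ε i = ω^{ω^{ε 0}} · ⋯ · ω^{ω^{ε i}}`. -/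
noncomputable def alpProd (ε : ℕ → Ordinal.{u}) : ℕ → Ordinal.{u}
  | 0 => omega0 ^ omega0 ^ ε 0
  | (i + 1) => alpProd ε i * omega0 ^ omega0 ^ ε (i + 1)

/-- The separation function `ς_P` of a tree whose rank has decomposition
`ω^{ω^{ε 0}} ⋯ ω^{ω^{ε l}}`: the least `i` such that `s, t` lie in the same block
`P^{α_i·δ} \ P^{α_i·(δ+1)}` for some ordinal `δ`. -/
noncomputable def sep {α : Type u} [PartialOrder α] (P : Set α) (ε : ℕ → Ordinal.{u})
    (s t : α) : ℕ :=
  sInf {i : ℕ | ∃ δ : Ordinal.{u},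
    s ∈ derivIter P (alpProd ε i * δ) \ derivIter P (alpProd ε i * (δ + 1)) ∧
    t ∈ derivIter P (alpProd ε i * δ) \ derivIter P (alpProd ε i * (δ + 1))}

/-- `indProd ε A l = ω^{ω^{ε 0}·1_A(0)} ⋯ ω^{ω^{ε l}·1_A(l)}`. -/
noncomputable def indProd (ε : ℕ → Ordinal.{u}) (A : Set ℕ) : ℕ → Ordinal.{u}
  | 0 => omega0 ^ (omega0 ^ ε 0 * A.indicator (fun _ => (1 : Ordinal.{u})) 0)
  | (i + 1) => indProd ε A i *
      omega0 ^ (omega0 ^ ε (i + 1) * A.indicator (fun _ => (1 : Ordinal.{u})) (i + 1))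

/-- `sumPow ε i = ω^{ε 0} + ⋯ + ω^{ε (i-1)}` (the partial sums `γ_i`). -/
noncomputable def sumPow (ε : ℕ → Ordinal.{u}) : ℕ → Ordinal.{u}
  | 0 => 0
  | (i + 1) => sumPow ε i + omega0 ^ ε i

/-- `indSum ε A i = Σ_{n < i} 1_A(n)·ω^{ε n}`. -/
noncomputable def indSum (ε : ℕ → Ordinal.{u}) (A : Set ℕ) : ℕ → Ordinal.{u}
  | 0 => 0
  | (i + 1) => indSum ε A i + A.indicator (fun _ => (1 : Ordinal.{u})) i * omega0 ^ ε i



section AuxLemmas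

variable {α : Type u} [PartialOrder α]

lemma derivIter_zero (P : Set α) : derivIter P 0 = P :=
  Ordinal.limitRecOn_zero ..

lemma derivIter_succ (P : Set α) (ξ : Ordinal.{u}) :
    derivIter P (Order.succ ξ) = treeDeriv (derivIter P ξ) :=
  Ordinal.limitRecOn_succ ..

lemma derivIter_limit (P : Set α) {ξ : Ordinal.{u}} (h : Order.IsSuccLimit ξ) :
    derivIter P ξ = ⋂ (ν : Set.Iio ξ), derivIter P ν.1 :=
  Ordinal.limitRecOn_limit _ _ _ _ h

lemma treeDeriv_subset (P : Set α) : treeDeriv P ⊆ P := diff_subset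

lemma derivIter_anti (P : Set α) : ∀ {b a : Ordinal.{u}}, a ≤ b →
    derivIter P b ⊆ derivIter P a := by
  intro b
  induction b using Ordinal.limitRecOn with
  | zero => intro a ha; rw [nonpos_iff_eq_zero.1 ha]
  | add_one b ih =>
    rw [Ordinal.add_one_eq_succ]
    intro a ha
    rcases Order.le_succ_iff_eq_or_le.1 ha with rfl | ha
    · exact subset_rfl
    · exact (derivIter_succ P b ▸ treeDeriv_subset _).trans (ih ha)
  | limit b hb ih =>
    intro a ha
    rcases eq_or_lt_of_le ha with rfl | ha
    · exact subset_rfl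
    · rw [derivIter_limit P hb]
      exact iInter_subset (fun ν : Set.Iio b => derivIter P ν.1) ⟨a, ha⟩

lemma derivIter_subset (P : Set α) (ξ : Ordinal.{u}) : derivIter P ξ ⊆ P := by
  have := derivIter_anti P (zero_le : (0 : Ordinal.{u}) ≤ ξ)
  rwa [derivIter_zero] at this

lemma derivIter_add (P : Set α) (a b : Ordinal.{u}) :
    derivIter P (a + b) = derivIter (derivIter P a) b := by
  induction b using Ordinal.limitRecOn with
  | zero => rw [add_zero, derivIter_zero]
  | add_one b ih => rw [Ordinal.add_one_eq_succ, add_succ, ← Ordinal.add_one_eq_succ, Ordinal.add_one_eq_succ,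
      derivIter_succ, derivIter_succ, ih]
  | limit b hb ih =>
    rw [derivIter_limit P (isSuccLimit_add a hb), derivIter_limit _ hb]
    apply subset_antisymm
    · intro x hx
      simp only [mem_iInter] at hx ⊢
      intro ⟨ν, hν⟩
      rw [← ih ν hν]
      exact hx ⟨a + ν, (add_lt_add_iff_left a).2 hν⟩
    · intro x hx
      simp only [mem_iInter] at hx ⊢
      intro ⟨ν, hν⟩
      have h0 : x ∈ derivIter P a := by
        have := hx ⟨0, hb.pos⟩
        rwa [← ih 0 hb.pos, add_zero] at this
      rcases le_or_gt ν a with h | h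
      · exact derivIter_anti P h h0
      · have hsub : ν - a < b := sub_lt_of_lt_add hν hb.pos
        have := hx ⟨ν - a, hsub⟩
        rwa [← ih _ hsub, Ordinal.add_sub_cancel_of_le h.le] at this

lemma treeDeriv_union (R : Set α) (S : α → Set α)
    (hgt : ∀ t ∈ treeLeaves R, ∀ x ∈ S t, t < x)
    (hinc : ∀ t ∈ treeLeaves R, ∀ t' ∈ treeLeaves R, t ≠ t' →
      ∀ a ∈ S t, ∀ b ∈ S t', ¬ a ≤ b)
    (hne : ∀ t ∈ treeLeaves R, (S t).Nonempty) :
    treeDeriv (R ∪ ⋃ t ∈ treeLeaves R, S t) =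
      R ∪ ⋃ t ∈ treeLeaves R, treeDeriv (S t) := by
  set L := treeLeaves R with hL
  set U := R ∪ ⋃ t ∈ L, S t with hU
  have hAu : ∀ r ∈ R, r ∉ treeLeaves U := by
    intro r hr hleaf
    by_cases hrL : r ∈ L
    · obtain ⟨x, hx⟩ := hne r hrL
      exact hleaf.2 x (Or.inr (mem_biUnion hrL hx)) (hgt r hrL x hx)
    · rw [hL, treeLeaves, mem_setOf_eq] at hrL
      push_neg at hrL
      obtain ⟨s, hs, hrs⟩ := hrL hr
      exact hleaf.2 s (Or.inl hs) hrs
  have hB : ∀ t ∈ L, ∀ x ∈ S t, (x ∈ treeLeaves U ↔ x ∈ treeLeaves (S t)) := by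
    intro t ht x hx
    constructor
    · intro hleaf
      exact ⟨hx, fun s hs => hleaf.2 s (Or.inr (mem_biUnion ht hs))⟩
    · intro hleaf
      refine ⟨Or.inr (mem_biUnion ht hx), ?_⟩
      rintro y (hy | hy)
      · intro hxy
        exact ht.2 y hy ((hgt t ht x hx).trans hxy)
      · simp only [mem_iUnion] at hy
        obtain ⟨t', ht', hyt'⟩ := hy
        by_cases htt' : t = t'
        · subst htt'; exact hleaf.2 y hyt'
        · intro hxy; exact hinc t ht t' ht' htt' x hx y hyt' hxy.le
  ext x
  rw [treeDeriv, mem_diff]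
  constructor
  · rintro ⟨hxU, hnl⟩
    rcases hxU with hx | hx
    · exact Or.inl hx
    · simp only [mem_iUnion] at hx
      obtain ⟨t, ht, hxt⟩ := hx
      refine Or.inr (mem_biUnion ht ?_)
      rw [treeDeriv, mem_diff]
      exact ⟨hxt, fun h => hnl ((hB t ht x hxt).2 h)⟩
  · rintro (hx | hx)
    · exact ⟨Or.inl hx, hAu x hx⟩
    · simp only [mem_iUnion] at hx
      obtain ⟨t, ht, hxt⟩ := hx
      rw [treeDeriv, mem_diff] at hxt
      exact ⟨Or.inr (mem_biUnion ht hxt.1),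
        fun h => hxt.2 ((hB t ht x hxt.1).1 h)⟩

lemma treeRank_le {P : Set α} {ξ : Ordinal.{u}} (h : derivIter P ξ = ∅) :
    treeRank P ≤ ξ := csInf_le' h

lemma derivIter_treeRank {P : Set α} (h : IsWFTree P) :
    derivIter P (treeRank P) = ∅ :=
  csInf_mem (s := {ξ | derivIter P ξ = ∅}) h

end AuxLemmas

/-- if `R` is a nonempty well-founded subtree of a tree `P` and
for each leaf `t` of `R` there is a subtree `R_t ⊆ P(t)` of rank `ζ`, the `R_t`
pairwise totally incomparable, then with `Q = R ∪ ⋃_t R_t` one has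
`Q^μ = R ∪ ⋃_t R_t^μ` for `μ ≤ ζ`, `Q^{ζ+η} = R^η` for all `η`, and
`rank(Q) = ζ + rank(R)`. -/
theorem statement12 {α : Type u} [PartialOrder α] (P : Set α) (hP : IsTree P)
    (ζ : Ordinal.{u}) (R : Set α) (hRP : R ⊆ P) (hRne : R.Nonempty)
    (hRwf : IsWFTree R) (Rt : α → Set α)
    (hRt : ∀ t ∈ treeLeaves R, Rt t ⊆ {s ∈ P | t < s} ∧ IsWFTree (Rt t) ∧
      treeRank (Rt t) = ζ)
    (hinc : ∀ t ∈ treeLeaves R, ∀ t' ∈ treeLeaves R, t ≠ t' →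
      ∀ a ∈ Rt t, ∀ b ∈ Rt t', ¬ a ≤ b ∧ ¬ b ≤ a) :
    (∀ μ ≤ ζ, derivIter (R ∪ ⋃ t ∈ treeLeaves R, Rt t) μ =
      R ∪ ⋃ t ∈ treeLeaves R, derivIter (Rt t) μ) ∧
    (∀ η : Ordinal.{u},
      derivIter (R ∪ ⋃ t ∈ treeLeaves R, Rt t) (ζ + η) = derivIter R η) ∧
    treeRank (R ∪ ⋃ t ∈ treeLeaves R, Rt t) = ζ + treeRank R := by
  classical
  set L := treeLeaves R with hLdef
  set Q := R ∪ ⋃ t ∈ L, Rt t with hQdef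
  have hgt : ∀ t ∈ L, ∀ x ∈ Rt t, t < x := fun t ht x hx => ((hRt t ht).1 hx).2
  have hranks : ∀ t ∈ L, treeRank (Rt t) = ζ := fun t ht => (hRt t ht).2.2
  have hne : ∀ μ < ζ, ∀ t ∈ L, (derivIter (Rt t) μ).Nonempty := by
    intro μ hμ t ht
    rw [nonempty_iff_ne_empty]
    intro h
    exact absurd (treeRank_le h) (by rw [hranks t ht]; exact hμ.not_ge)
  have hsame : ∀ t ∈ L, ∀ t' ∈ L, ∀ x, x ∈ Rt t → x ∈ Rt t' → t = t' := by
    intro t ht t' ht' x hx hx'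
    by_contra htt'
    exact (hinc t ht t' ht' htt' x hx x hx').1 le_rfl
  have main : ∀ μ : Ordinal.{u}, μ ≤ ζ →
      derivIter Q μ = R ∪ ⋃ t ∈ L, derivIter (Rt t) μ := by
    intro μ
    induction μ using Ordinal.limitRecOn with
    | zero => intro _; simp only [derivIter_zero, hQdef]
    | add_one μ ih =>
      rw [Ordinal.add_one_eq_succ]
      intro h
      have hμζ : μ < ζ := (Order.lt_succ μ).trans_le h
      rw [derivIter_succ, ih hμζ.le,
        treeDeriv_union R (fun t => derivIter (Rt t) μ)
          (fun t ht x hx => hgt t ht x (derivIter_subset _ _ hx))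
          (fun t ht t' ht' htt' a ha b hb =>
            (hinc t ht t' ht' htt' a (derivIter_subset _ _ ha) b
              (derivIter_subset _ _ hb)).1)
          (fun t ht => hne μ hμζ t ht)]
      simp only [derivIter_succ, hLdef]
    | limit μ hμ ih =>
      intro h
      rw [derivIter_limit Q hμ]
      ext x
      simp only [mem_iInter, mem_union, mem_iUnion]
      constructor
      · intro hx
        by_cases hxR : x ∈ R
        · exact Or.inl hxR
        · have hx' : ∀ ν : Set.Iio μ, ∃ t, ∃ _ : t ∈ L, x ∈ derivIter (Rt t) ν.1 := by
            rintro ⟨ν, hν⟩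
            have h1 := hx ⟨ν, hν⟩
            rw [ih ν hν (hν.le.trans h)] at h1
            rcases h1 with h1 | h1
            · exact absurd h1 hxR
            · simpa only [mem_iUnion] using h1
          obtain ⟨t, ht, hx0⟩ := hx' ⟨0, hμ.pos⟩
          refine Or.inr ⟨t, ht, ?_⟩
          rw [derivIter_limit _ hμ, mem_iInter]
          rintro ⟨ν, hν⟩
          obtain ⟨t', ht', hxν⟩ := hx' ⟨ν, hν⟩
          have : t = t' := hsame t ht t' ht' x
            (derivIter_subset _ _ hx0) (derivIter_subset _ _ hxν)
          rwa [this]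
      · rintro hx ⟨ν, hν⟩
        rw [ih ν hν (hν.le.trans h)]
        rcases hx with hxR | ⟨t, ht, hxt⟩
        · exact Or.inl hxR
        · refine Or.inr (mem_biUnion ht ?_)
          have hmq : x ∈ derivIter (Rt t) μ := hxt
          exact derivIter_anti _ hν.le hmq
  have hQζ : derivIter Q ζ = R := by
    rw [main ζ le_rfl]
    have hempty : ∀ t ∈ L, derivIter (Rt t) ζ = (∅ : Set α) := by
      intro t ht
      have h1 := derivIter_treeRank (hRt t ht).2.1
      rwa [hranks t ht] at h1
    rw [iUnion₂_congr hempty]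
    simp
  have claim2 : ∀ η : Ordinal.{u}, derivIter Q (ζ + η) = derivIter R η := by
    intro η
    rw [derivIter_add, hQζ]
  refine ⟨main, claim2, ?_⟩
  have hRrank : derivIter R (treeRank R) = ∅ := derivIter_treeRank hRwf
  have hmem : derivIter Q (ζ + treeRank R) = ∅ := by rw [claim2]; exact hRrank
  apply le_antisymm
  · exact treeRank_le hmem
  · show ζ + treeRank R ≤ sInf {ξ : Ordinal.{u} | derivIter Q ξ = ∅}
    have hmem' : (ζ + treeRank R) ∈ {ξ : Ordinal.{u} | derivIter Q ξ = ∅} := hmem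
    apply le_csInf ⟨_, hmem'⟩
    intro ξ hξ
    rw [mem_setOf_eq] at hξ
    rcases le_or_gt ξ ζ with hle | hlt
    · exfalso
      have hsub : R ⊆ derivIter Q ξ := by
        rw [main ξ hle]; exact subset_union_left
      rw [hξ] at hsub
      exact hRne.ne_empty (eq_empty_of_subset_empty hsub)
    · have h1 : derivIter Q (ζ + (ξ - ζ)) = ∅ := by
        rw [Ordinal.add_sub_cancel_of_le hlt.le]; exact hξ
      rw [claim2] at h1
      calc ζ + treeRank R ≤ ζ + (ξ - ζ) := add_le_add_right (treeRank_le h1) ζ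
        _ = ξ := Ordinal.add_sub_cancel_of_le hlt.le
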